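/- Let n ≥ 2 and let H and K be two distinct subgroups of the dihedral group DihedralGroup (2^n), each isomorphic to the Klein four-group ZMod 2 × ZMod 2. Then H ∩ K equals the cyclic subgroup of order 2 generated by the half-turn r (2^(n-1)). -/

import Mathlib

open DihedralGroup

lemma zmod_two_torsion (n : ℕ) (hn : 1 ≤ n) (x : ZMod (2 ^ n)) (hx : x + x = 0) :
    x = 0 ∨ x = (2 ^ (n - 1) : ℕ) := by
  haveI : NeZero (2 ^ n) := ⟨by positivity⟩
  have hval : (x + x).val = 0 := by rw [hx]; exact ZMod.val_zero
  rw [ZMod.val_add] at hval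
  have h1 : x.val < 2 ^ n := ZMod.val_lt x
  have h2 : 2 ^ n = 2 * 2 ^ (n - 1) := by
    rw [← pow_succ']; congr 1; omega
  have h3 : (2 ^ n) ∣ (x.val + x.val) := Nat.dvd_of_mod_eq_zero hval
  have h3' : 2 * 2 ^ (n - 1) ∣ 2 * x.val := by rw [← h2, two_mul]; exact h3
  have h5 : 2 ^ (n - 1) ∣ x.val := (mul_dvd_mul_iff_left (two_ne_zero)).mp h3'
  have h4 : x.val = 0 ∨ x.val = 2 ^ (n - 1) := by
    obtain ⟨c, hc⟩ := h5
    rcases c with _ | _ | c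
    · omega
    · omega
    · have : 2 ^ (n-1) * 2 ≤ 2 ^ (n-1) * (c + 1 + 1) :=
        Nat.mul_le_mul_left _ (by omega)
      omega
  rcases h4 with h | h
  · left; rw [← ZMod.val_eq_zero]; exact h
  · right
    have hv : ((2 ^ (n-1) : ℕ) : ZMod (2^n)).val = 2 ^ (n-1) := by
      apply ZMod.val_cast_of_lt; omega
    apply ZMod.val_injective
    rw [h, hv]

lemma half_ne_zero (n : ℕ) (hn : 1 ≤ n) : ((2 ^ (n - 1) : ℕ) : ZMod (2 ^ n)) ≠ 0 := by
  haveI : NeZero (2 ^ n) := ⟨by positivity⟩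
  intro h
  have hd := (ZMod.natCast_eq_zero_iff _ _).mp h
  have h1 : (2:ℕ) ^ n ≤ 2 ^ (n-1) := Nat.le_of_dvd (by positivity) hd
  have h2 : (2:ℕ) ^ (n-1) < 2 ^ n := Nat.pow_lt_pow_right (by norm_num) (by omega)
  omega

lemma half_add_half (n : ℕ) (hn : 1 ≤ n) :
    ((2 ^ (n - 1) : ℕ) : ZMod (2 ^ n)) + ((2 ^ (n - 1) : ℕ) : ZMod (2 ^ n)) = 0 := by
  haveI : NeZero (2 ^ n) := ⟨by positivity⟩
  rw [← Nat.cast_add]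
  rw [ZMod.natCast_eq_zero_iff]
  have h2 : 2 ^ n = 2 * 2 ^ (n - 1) := by rw [← pow_succ']; congr 1; omega
  exact ⟨1, by omega⟩

lemma invol_class (n : ℕ) (hn : 1 ≤ n) (x : DihedralGroup (2 ^ n)) (hx : x * x = 1) :
    x = 1 ∨ x = r ((2 ^ (n - 1) : ℕ) : ZMod (2 ^ n)) ∨ ∃ i, x = sr i := by
  cases x with
  | r i =>
    rw [r_mul_r, one_def, r.injEq] at hx
    rcases zmod_two_torsion n hn i hx with h | h
    · left; rw [one_def, h]
    · right; left; rw [h]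
  | sr i => exact Or.inr (Or.inr ⟨i, rfl⟩)

lemma klein_struct (n : ℕ) (hn : 1 ≤ n) (H : Subgroup (DihedralGroup (2 ^ n)))
    (h4 : Nat.card H = 4) (hsq : ∀ x ∈ H, x * x = 1) :
    ∃ i : ZMod (2 ^ n), (H : Set (DihedralGroup (2 ^ n))) =
      {1, r ((2 ^ (n - 1) : ℕ) : ZMod (2 ^ n)), sr i,
        sr (i + ((2 ^ (n - 1) : ℕ) : ZMod (2 ^ n)))} := by
  haveI : NeZero (2 ^ n) := ⟨by positivity⟩
  set h : ZMod (2 ^ n) := ((2 ^ (n - 1) : ℕ) : ZMod (2 ^ n)) with hh_def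
  have hh0 : h ≠ 0 := half_ne_zero n hn
  have hhh : h + h = 0 := half_add_half n hn
  have hncard : (H : Set (DihedralGroup (2 ^ n))).ncard = 4 := by
    rw [← Nat.card_coe_set_eq]; exact h4
  set S : Set (DihedralGroup (2 ^ n)) := (H : Set _) \ {1, r h} with hS_def
  have hS2 : 1 < S.ncard := by
    have hu : (H : Set (DihedralGroup (2 ^ n))).ncard ≤ S.ncard + ({1, r h} : Set _).ncard := by
      refine le_trans (Set.ncard_le_ncard ?_ (Set.toFinite _)) (Set.ncard_union_le _ _)
      intro x hx
      by_cases hx2 : x ∈ ({1, r h} : Set (DihedralGroup (2 ^ n)))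
      · exact Or.inr hx2
      · exact Or.inl ⟨hx, hx2⟩
    have h2 : ({1, r h} : Set (DihedralGroup (2 ^ n))).ncard ≤ 2 := by
      refine le_trans (Set.ncard_insert_le _ _) ?_
      simp
    omega
  obtain ⟨a, b, ha, hb, hab⟩ := (Set.one_lt_ncard_iff (Set.toFinite S)).mp hS2
  obtain ⟨haH, haN⟩ := ha
  obtain ⟨hbH, hbN⟩ := hb
  simp only [Set.mem_insert_iff, Set.mem_singleton_iff, not_or] at haN hbN
  obtain ⟨i, rfl⟩ : ∃ i, a = sr i := by
    rcases invol_class n hn a (hsq a haH) with h1 | h1 | h1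
    · exact absurd h1 haN.1
    · exact absurd h1 haN.2
    · exact h1
  obtain ⟨j, rfl⟩ : ∃ j, b = sr j := by
    rcases invol_class n hn b (hsq b hbH) with h1 | h1 | h1
    · exact absurd h1 hbN.1
    · exact absurd h1 hbN.2
    · exact h1
  have hij : i ≠ j := fun hc => hab (by rw [hc])
  have hmem : r (j - i) ∈ H := by
    have := H.mul_mem haH hbH
    rwa [sr_mul_sr] at this
  have hji : j - i = h := by
    rcases invol_class n hn _ (hsq _ hmem) with h1 | h1 | h1
    · rw [one_def, r.injEq] at h1
      exact absurd (sub_eq_zero.mp h1).symm hij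
    · rwa [r.injEq] at h1
    · obtain ⟨k, hk⟩ := h1; exact absurd hk (by simp)
  refine ⟨i, ?_⟩
  have hsub : ({1, r h, sr i, sr (i + h)} : Set (DihedralGroup (2 ^ n))) ⊆ H := by
    intro x hx
    simp only [Set.mem_insert_iff, Set.mem_singleton_iff] at hx
    rcases hx with rfl | rfl | rfl | rfl
    · exact H.one_mem
    · rw [← hji]; exact hmem
    · exact haH
    · have : i + h = j := by rw [← hji]; ring
      rw [this]; exact hbH
  have hT4 : ({1, r h, sr i, sr (i + h)} : Set (DihedralGroup (2 ^ n))).ncard = 4 := by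
    have e1 : (1 : DihedralGroup (2 ^ n)) ≠ r h := by
      rw [one_def, ne_eq, r.injEq]
      exact fun hc => hh0 hc.symm
    have e2 : sr i ≠ sr (i + h) := by
      simp only [ne_eq, sr.injEq]
      intro hc
      exact hh0 (by linear_combination -hc)
    rw [Set.ncard_insert_of_notMem (by simp [one_def, -r_zero, Ne.symm hh0]),
      Set.ncard_insert_of_notMem (by simp),
      Set.ncard_insert_of_notMem (by simp [e2]),
      Set.ncard_singleton]
  exact (Set.eq_of_subset_of_ncard_le hsub (by omega) (Set.toFinite _)).symm

lemma zpowers_sq_eq {G : Type*} [Group G] (g : G) (hg : g * g = 1) :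
    (Subgroup.zpowers g : Set G) = {1, g} := by
  have h2 : g ^ (2 : ℤ) = 1 := by
    rw [zpow_two]; exact hg
  ext x
  simp only [Set.mem_insert_iff, Set.mem_singleton_iff, SetLike.mem_coe]
  constructor
  · intro hx
    obtain ⟨k, rfl⟩ := Subgroup.mem_zpowers_iff.mp hx
    rcases Int.even_or_odd k with ⟨m, rfl⟩ | ⟨m, rfl⟩
    · left
      rw [show m + m = 2 * m by ring, zpow_mul, h2, one_zpow]
    · right
      rw [zpow_add, zpow_mul, h2, one_zpow, one_mul, zpow_one]
  · rintro (rfl | rfl)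
    · exact Subgroup.one_mem _
    · exact Subgroup.mem_zpowers _

lemma klein_card_sq {H : Type*} [Group H]
    (e : H ≃* Multiplicative (ZMod 2 × ZMod 2)) :
    Nat.card H = 4 ∧ ∀ x : H, x * x = 1 := by
  constructor
  · rw [Nat.card_congr e.toEquiv]
    simp [Nat.card_eq_fintype_card]
  · intro x
    have hz : ∀ z : Multiplicative (ZMod 2 × ZMod 2), z * z = 1 := by decide
    apply e.injective
    rw [map_mul, map_one]
    exact hz _

theorem dihedral_klein_four_intersection (n : ℕ) (hn : 2 ≤ n)
    (H K : Subgroup (DihedralGroup (2 ^ n))) (hne : H ≠ K)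
    (hH : Nonempty (H ≃* Multiplicative (ZMod 2 × ZMod 2)))
    (hK : Nonempty (K ≃* Multiplicative (ZMod 2 × ZMod 2))) :
    H ⊓ K = Subgroup.zpowers (r (2 ^ (n - 1) : ZMod (2 ^ n))) := by
  haveI : NeZero (2 ^ n) := ⟨by positivity⟩
  have hn1 : 1 ≤ n := by omega
  set h : ZMod (2 ^ n) := ((2 ^ (n - 1) : ℕ) : ZMod (2 ^ n)) with hh_def
  have hcast : (2 ^ (n - 1) : ZMod (2 ^ n)) = h := by
    rw [hh_def]; push_cast; ring
  have hh0 : h ≠ 0 := half_ne_zero n hn1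
  have hhh : h + h = 0 := half_add_half n hn1
  -- extract Klein structure
  obtain ⟨eH⟩ := hH
  obtain ⟨eK⟩ := hK
  obtain ⟨hH4, hHsq⟩ := klein_card_sq eH
  obtain ⟨hK4, hKsq⟩ := klein_card_sq eK
  have hHsq' : ∀ x ∈ H, x * x = 1 := by
    intro x hx
    have := hHsq ⟨x, hx⟩
    exact congrArg Subtype.val this
  have hKsq' : ∀ x ∈ K, x * x = 1 := by
    intro x hx
    have := hKsq ⟨x, hx⟩
    exact congrArg Subtype.val this
  obtain ⟨i, hHset⟩ := klein_struct n hn1 H hH4 hHsq'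
  obtain ⟨j, hKset⟩ := klein_struct n hn1 K hK4 hKsq'
  -- helper: equal parameter sets give equal subgroup sets
  have key : ∀ a b : ZMod (2 ^ n), a = b ∨ a = b + h →
      ({1, r h, sr a, sr (a + h)} : Set (DihedralGroup (2 ^ n))) =
        {1, r h, sr b, sr (b + h)} := by
    rintro a b (rfl | rfl)
    · rfl
    · have hb : b + h + h = b := by rw [add_assoc, hhh, add_zero]
      rw [hb, Set.pair_comm (sr (b + h)) (sr b)]
  have hrh_mem : ∀ (L : Subgroup (DihedralGroup (2 ^ n))) (a : ZMod (2 ^ n)),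
      (L : Set _) = {1, r h, sr a, sr (a + h)} → r h ∈ L := by
    intro L a hL
    have : r h ∈ (L : Set (DihedralGroup (2 ^ n))) := by
      rw [hL]; right; left; rfl
    exact this
  rw [hcast]
  apply SetLike.coe_injective
  rw [Subgroup.coe_inf, zpowers_sq_eq (r h) (by rw [r_mul_r, hhh, ← one_def]),
    hHset, hKset]
  ext x
  simp only [Set.mem_inter_iff, Set.mem_insert_iff, Set.mem_singleton_iff]
  constructor
  · rintro ⟨hxH, hxK⟩
    rcases hxH with rfl | rfl | rfl | rfl
    · exact Or.inl rfl
    · exact Or.inr rfl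
    · -- x = sr i, also in K's set
      exfalso
      have hij : i = j ∨ i = j + h := by
        rcases hxK with hc | hc | hc | hc
        · exact absurd hc (by simp [one_def, -r_zero])
        · exact absurd hc (by simp)
        · rw [sr.injEq] at hc; exact Or.inl hc
        · rw [sr.injEq] at hc; exact Or.inr hc
      exact hne (SetLike.coe_injective (hHset.trans ((key i j hij).trans hKset.symm)))
    · exfalso
      have hij : i = j ∨ i = j + h := by
        rcases hxK with hc | hc | hc | hc
        · exact absurd hc (by simp [one_def, -r_zero])
        · exact absurd hc (by simp)
        · rw [sr.injEq] at hc
          right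
          have : i + h + h = i := by rw [add_assoc, hhh, add_zero]
          rw [← this, hc]
        · rw [sr.injEq] at hc
          left
          have : i + h + h = i := by rw [add_assoc, hhh, add_zero]
          rw [← this, hc, add_assoc, hhh, add_zero]
      exact hne (SetLike.coe_injective (hHset.trans ((key i j hij).trans hKset.symm)))
  · rintro (rfl | rfl)
    · exact ⟨Or.inl rfl, Or.inl rfl⟩
    · exact ⟨Or.inr (Or.inl rfl), Or.inr (Or.inl rfl)⟩
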